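/- Let M : k → n and N : n → m be P/T nets with boundaries, and let X, X' ∈ Multiset(P_M) and Y, Y' ∈ Multiset(P_N) be markings. Then (M;N)_{X+Y} =α/β⇒ (M;N)_{X'+Y'} under the weak labelled semantics if and only if there exists γ ∈ ℕ^n such that M_X =α/γ⇒ M_{X'} and N_Y =γ/β⇒ N_{Y'}. -/

import Mathlib

/-- A P/T net with boundaries `m → n` (well-formedness in `PTNet.Valid`). -/
structure PTNet (m n : ℕ) : Type 1 where
  P : Type
  T : Type
  pre : T → Multiset P
  post : T → Multiset P
  src : T → Multiset (Fin m)
  tgt : T → Multiset (Fin n)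

namespace PTNet

variable {k l m n : ℕ}

/-- Linear extension of `pre` to multisets of transitions. -/
def preM (N : PTNet m n) (U : Multiset N.T) : Multiset N.P := (U.map N.pre).sum
def postM (N : PTNet m n) (U : Multiset N.T) : Multiset N.P := (U.map N.post).sum
def srcM (N : PTNet m n) (U : Multiset N.T) : Multiset (Fin m) := (U.map N.src).sum
def tgtM (N : PTNet m n) (U : Multiset N.T) : Multiset (Fin n) := (U.map N.tgt).sum

/-- Well-formedness: finiteness and distinct footprints. -/
def Valid (N : PTNet m n) : Prop :=
  Finite N.P ∧ Finite N.T ∧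
  ∀ t u : N.T, N.pre t = N.pre u → N.post t = N.post u →
    N.src t = N.src u → N.tgt t = N.tgt u → t = u

/-- Strong firing of P/T nets: `N_X →_U N_Y`. -/
def SFire (N : PTNet m n) (X : Multiset N.P) (U : Multiset N.T)
    (Y : Multiset N.P) : Prop :=
  letI := Classical.decEq N.P
  N.preM U ≤ X ∧ N.postM U ≤ Y ∧ X - N.preM U = Y - N.postM U

/-- Weak (banking) firing of P/T nets: `N_X ⇒_U N_Y`. -/
def WFire (N : PTNet m n) (X : Multiset N.P) (U : Multiset N.T)
    (Y : Multiset N.P) : Prop :=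
  Y + N.preM U = X + N.postM U

/-- Characteristic function `χ : Multiset (Fin k) → ℕ^k`. -/
def chiM {k : ℕ} (M : Multiset (Fin k)) : Fin k → ℕ := fun i => M.count i

/-- Strong labelled semantics of P/T nets with boundaries. -/
def SLts (N : PTNet m n) (X : Multiset N.P) (α : Fin m → ℕ) (β : Fin n → ℕ)
    (Y : Multiset N.P) : Prop :=
  ∃ U : Multiset N.T, N.SFire X U Y ∧ α = chiM (N.srcM U) ∧ β = chiM (N.tgtM U)

/-- Weak labelled semantics of P/T nets with boundaries. -/
def WLts (N : PTNet m n) (X : Multiset N.P) (α : Fin m → ℕ) (β : Fin n → ℕ)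
    (Y : Multiset N.P) : Prop :=
  ∃ U : Multiset N.T, N.WFire X U Y ∧ α = chiM (N.srcM U) ∧ β = chiM (N.tgtM U)

/-- Synchronisation between P/T nets with a common boundary. -/
def Synch (M : PTNet l m) (N : PTNet m n) (U : Multiset M.T)
    (V : Multiset N.T) : Prop :=
  ¬(U = 0 ∧ V = 0) ∧ M.tgtM U = N.srcM V

/-- Minimal synchronisation. -/
def MinSynch (M : PTNet l m) (N : PTNet m n) (U : Multiset M.T)
    (V : Multiset N.T) : Prop :=
  Synch M N U V ∧
    ∀ U' V', Synch M N U' V' → U' ≤ U → V' ≤ V → U' = U ∧ V' = V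

end PTNet
namespace PTNet

variable {k l m n : ℕ}

/-- Footprints of transitions of the composite P/T net. -/
def FootprintPT (M : PTNet l m) (N : PTNet m n) : Type :=
  Multiset (M.P ⊕ N.P) × Multiset (M.P ⊕ N.P) × Multiset (Fin l) × Multiset (Fin n)

def footOf (M : PTNet l m) (N : PTNet m n) (U : Multiset M.T) (V : Multiset N.T) :
    FootprintPT M N :=
  ((M.preM U).map Sum.inl + (N.preM V).map Sum.inr,
   (M.postM U).map Sum.inl + (N.postM V).map Sum.inr,
   M.srcM U, N.tgtM V)

/-- Combined marking on a disjoint union of places. -/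
def mmk {A B : Type} (X : Multiset A) (Y : Multiset B) : Multiset (A ⊕ B) :=
  X.map Sum.inl + Y.map Sum.inr

/-- Composition of P/T nets with boundaries along a common boundary. -/
def comp (M : PTNet l m) (N : PTNet m n) : PTNet l n where
  P := M.P ⊕ N.P
  T := {fp : FootprintPT M N // ∃ U V, MinSynch M N U V ∧ footOf M N U V = fp}
  pre t := t.1.1
  post t := t.1.2.1
  src t := t.1.2.2.1
  tgt t := t.1.2.2.2

end PTNet

namespace PTNet

variable {k l m n : ℕ}

lemma preM_add (N : PTNet m n) (U V : Multiset N.T) :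
    N.preM (U + V) = N.preM U + N.preM V := by simp [preM]

lemma postM_add (N : PTNet m n) (U V : Multiset N.T) :
    N.postM (U + V) = N.postM U + N.postM V := by simp [postM]

lemma srcM_add (N : PTNet m n) (U V : Multiset N.T) :
    N.srcM (U + V) = N.srcM U + N.srcM V := by simp [srcM]

lemma tgtM_add (N : PTNet m n) (U V : Multiset N.T) :
    N.tgtM (U + V) = N.tgtM U + N.tgtM V := by simp [tgtM]

lemma preM_zero (N : PTNet m n) : N.preM 0 = 0 := by simp [preM]
lemma postM_zero (N : PTNet m n) : N.postM 0 = 0 := by simp [postM]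
lemma srcM_zero (N : PTNet m n) : N.srcM 0 = 0 := by simp [srcM]
lemma tgtM_zero (N : PTNet m n) : N.tgtM 0 = 0 := by simp [tgtM]

lemma preM_cons (N : PTNet m n) (t : N.T) (U : Multiset N.T) :
    N.preM (t ::ₘ U) = N.pre t + N.preM U := by simp [preM]
lemma postM_cons (N : PTNet m n) (t : N.T) (U : Multiset N.T) :
    N.postM (t ::ₘ U) = N.post t + N.postM U := by simp [postM]
lemma srcM_cons (N : PTNet m n) (t : N.T) (U : Multiset N.T) :
    N.srcM (t ::ₘ U) = N.src t + N.srcM U := by simp [srcM]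
lemma tgtM_cons (N : PTNet m n) (t : N.T) (U : Multiset N.T) :
    N.tgtM (t ::ₘ U) = N.tgt t + N.tgtM U := by simp [tgtM]

lemma chiM_inj {k : ℕ} {A B : Multiset (Fin k)} (h : chiM A = chiM B) : A = B :=
  Multiset.ext.2 fun a => congrFun h a

lemma mmk_add {A B : Type} (X X' : Multiset A) (Y Y' : Multiset B) :
    mmk (X + X') (Y + Y') = mmk X Y + mmk X' Y' := by
  simp only [mmk, Multiset.map_add]
  abel

lemma mmk_zero {A B : Type} : mmk (0 : Multiset A) (0 : Multiset B) = 0 := by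
  simp [mmk]

lemma mmk_inj {A B : Type} {X X' : Multiset A} {Y Y' : Multiset B}
    (h : mmk X Y = mmk X' Y') : X = X' ∧ Y = Y' := by
  classical
  constructor
  · ext a
    have := congrArg (Multiset.count (Sum.inl a : A ⊕ B)) h
    simpa [mmk, Multiset.count_map_eq_count' _ _ Sum.inl_injective,
      Multiset.count_eq_zero] using this
  · ext b
    have := congrArg (Multiset.count (Sum.inr b : A ⊕ B)) h
    simpa [mmk, Multiset.count_map_eq_count' _ _ Sum.inr_injective,
      Multiset.count_eq_zero] using this

/-- Key decomposition: any "balanced" pair of transition multisets of `M` and `N`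
can be realized as a multiset of transitions of the composite. -/
lemma decomp (M : PTNet l m) (N : PTNet m n) :
    ∀ c (U : Multiset M.T) (V : Multiset N.T),
      Multiset.card U + Multiset.card V ≤ c → M.tgtM U = N.srcM V →
      ∃ W : Multiset (M.comp N).T,
        (M.comp N).preM W = mmk (M.preM U) (N.preM V) ∧
        (M.comp N).postM W = mmk (M.postM U) (N.postM V) ∧
        (M.comp N).srcM W = M.srcM U ∧
        (M.comp N).tgtM W = N.tgtM V := by
  intro c
  induction c with
  | zero =>
    intro U V hc _
    have hU : U = 0 := by
      have := Multiset.card_eq_zero.mp (by omega : Multiset.card U = 0); exact this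
    have hV : V = 0 := by
      have := Multiset.card_eq_zero.mp (by omega : Multiset.card V = 0); exact this
    subst hU; subst hV
    exact ⟨0, by simp [preM_zero, postM_zero, srcM_zero, tgtM_zero, mmk_zero]; rfl⟩
  | succ c ih =>
    intro U V hc hbal
    by_cases h0 : U = 0 ∧ V = 0
    · obtain ⟨hU, hV⟩ := h0; subst hU; subst hV
      exact ⟨0, by simp [preM_zero, postM_zero, srcM_zero, tgtM_zero, mmk_zero]; rfl⟩
    · classical
      -- pick a sub-synchronisation of minimal size
      have hS : ∃ c', ∃ U' V', Synch M N U' V' ∧ U' ≤ U ∧ V' ≤ V ∧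
          Multiset.card U' + Multiset.card V' = c' :=
        ⟨_, U, V, ⟨h0, hbal⟩, le_rfl, le_rfl, rfl⟩
      obtain ⟨U₀, V₀, hsyn₀, hU₀, hV₀, hcard₀⟩ := Nat.find_spec hS
      have hmin : ∀ U' V', Synch M N U' V' → U' ≤ U → V' ≤ V →
          Nat.find hS ≤ Multiset.card U' + Multiset.card V' := by
        intro U' V' hs hu hv
        exact Nat.find_le ⟨U', V', hs, hu, hv, rfl⟩
      have hms : MinSynch M N U₀ V₀ := by
        refine ⟨hsyn₀, fun U' V' hs hu hv => ?_⟩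
        have h1 := hmin U' V' hs (hu.trans hU₀) (hv.trans hV₀)
        have h2 : Multiset.card U' ≤ Multiset.card U₀ := Multiset.card_le_card hu
        have h3 : Multiset.card V' ≤ Multiset.card V₀ := Multiset.card_le_card hv
        have hU' : Multiset.card U₀ ≤ Multiset.card U' := by omega
        have hV' : Multiset.card V₀ ≤ Multiset.card V' := by omega
        exact ⟨Multiset.eq_of_le_of_card_le hu hU',
          Multiset.eq_of_le_of_card_le hv hV'⟩
      set t₀ : (M.comp N).T := ⟨footOf M N U₀ V₀, U₀, V₀, hms, rfl⟩ with ht₀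
      -- recurse on the remainder
      have hUeq : U₀ + (U - U₀) = U := add_tsub_cancel_of_le hU₀
      have hVeq : V₀ + (V - V₀) = V := add_tsub_cancel_of_le hV₀
      have hne : 1 ≤ Multiset.card U₀ + Multiset.card V₀ := by
        rcases Nat.eq_zero_or_pos (Multiset.card U₀ + Multiset.card V₀) with h | h
        · exfalso
          exact hsyn₀.1 ⟨Multiset.card_eq_zero.mp (by omega),
            Multiset.card_eq_zero.mp (by omega)⟩
        · exact h
      have hcards : Multiset.card (U - U₀) + Multiset.card (V - V₀) ≤ c := by
        have h1 : Multiset.card U₀ + Multiset.card (U - U₀) = Multiset.card U := by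
          rw [← Multiset.card_add, hUeq]
        have h2 : Multiset.card V₀ + Multiset.card (V - V₀) = Multiset.card V := by
          rw [← Multiset.card_add, hVeq]
        omega
      have hbal' : M.tgtM (U - U₀) = N.srcM (V - V₀) := by
        have h1 : M.tgtM U₀ + M.tgtM (U - U₀) = M.tgtM U := by
          rw [← tgtM_add, hUeq]
        have h2 : N.srcM V₀ + N.srcM (V - V₀) = N.srcM V := by
          rw [← srcM_add, hVeq]
        have := hsyn₀.2
        have h3 : M.tgtM U₀ + M.tgtM (U - U₀) = M.tgtM U₀ + N.srcM (V - V₀) := by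
          rw [h1, hbal, ← h2, this]
        exact add_left_cancel h3
      obtain ⟨W', hpre', hpost', hsrc', htgt'⟩ := ih (U - U₀) (V - V₀) hcards hbal'
      refine ⟨t₀ ::ₘ W', ?_, ?_, ?_, ?_⟩
      · rw [preM_cons, hpre']
        show mmk (M.preM U₀) (N.preM V₀) + mmk (M.preM (U - U₀)) (N.preM (V - V₀)) = _
        rw [← mmk_add, ← preM_add, ← preM_add, hUeq, hVeq]
      · rw [postM_cons, hpost']
        show mmk (M.postM U₀) (N.postM V₀) + mmk (M.postM (U - U₀)) (N.postM (V - V₀)) = _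
        rw [← mmk_add, ← postM_add, ← postM_add, hUeq, hVeq]
      · rw [srcM_cons, hsrc']
        show M.srcM U₀ + M.srcM (U - U₀) = _
        rw [← srcM_add, hUeq]
      · rw [tgtM_cons, htgt']
        show N.tgtM V₀ + N.tgtM (V - V₀) = _
        rw [← tgtM_add, hVeq]

/-- Recomposition: any multiset of composite transitions comes from a balanced pair. -/
lemma recomp (M : PTNet l m) (N : PTNet m n) (W : Multiset (M.comp N).T) :
    ∃ (U : Multiset M.T) (V : Multiset N.T), M.tgtM U = N.srcM V ∧
      (M.comp N).preM W = mmk (M.preM U) (N.preM V) ∧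
      (M.comp N).postM W = mmk (M.postM U) (N.postM V) ∧
      (M.comp N).srcM W = M.srcM U ∧
      (M.comp N).tgtM W = N.tgtM V := by
  induction W using Multiset.induction with
  | empty =>
    exact ⟨0, 0, by simp [preM_zero, postM_zero, srcM_zero, tgtM_zero, mmk_zero]; rfl⟩
  | cons t W ih =>
    obtain ⟨U, V, hbal, hpre, hpost, hsrc, htgt⟩ := ih
    obtain ⟨U₀, V₀, hms, hfp⟩ := t.2
    refine ⟨U₀ + U, V₀ + V, ?_, ?_, ?_, ?_, ?_⟩
    · rw [tgtM_add, srcM_add, hbal, hms.1.2]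
    · rw [preM_cons, hpre, preM_add, preM_add, mmk_add]
      congr 1
      show ((M.comp N).pre t) = _
      rw [show (M.comp N).pre t = t.1.1 from rfl, ← hfp]; rfl
    · rw [postM_cons, hpost, postM_add, postM_add, mmk_add]
      congr 1
      show ((M.comp N).post t) = _
      rw [show (M.comp N).post t = t.1.2.1 from rfl, ← hfp]; rfl
    · rw [srcM_cons, hsrc, srcM_add]
      congr 1
      rw [show (M.comp N).src t = t.1.2.2.1 from rfl, ← hfp]; rfl
    · rw [tgtM_cons, htgt, tgtM_add]
      congr 1
      rw [show (M.comp N).tgt t = t.1.2.2.2 from rfl, ← hfp]; rfl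

end PTNet

/-- Theorem `ptnetdecomposition` (ii): the weak (banking)
labelled semantics of the composite P/T net `M;N` decomposes. -/
theorem stmt6 {k n m : ℕ} (M : PTNet k n) (N : PTNet n m)
    (hM : M.Valid) (hN : N.Valid)
    (X X' : Multiset M.P) (Y Y' : Multiset N.P)
    (α : Fin k → ℕ) (β : Fin m → ℕ) :
    (M.comp N).WLts (PTNet.mmk X Y) α β (PTNet.mmk X' Y') ↔
      ∃ γ : Fin n → ℕ, M.WLts X α γ X' ∧ N.WLts Y γ β Y' := by
  constructor
  · rintro ⟨W, hfire, hα, hβ⟩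
    obtain ⟨U, V, hbal, hpre, hpost, hsrc, htgt⟩ := PTNet.recomp M N W
    refine ⟨PTNet.chiM (M.tgtM U), ⟨U, ?_, by rw [hα, hsrc], rfl⟩,
      ⟨V, ?_, by rw [hbal], by rw [hβ, htgt]⟩⟩
    · have h : PTNet.mmk (X' + M.preM U) (Y' + N.preM V) =
          PTNet.mmk (X + M.postM U) (Y + N.postM V) := by
        rw [PTNet.mmk_add, PTNet.mmk_add, ← hpre, ← hpost]
        exact hfire
      exact (PTNet.mmk_inj h).1
    · have h : PTNet.mmk (X' + M.preM U) (Y' + N.preM V) =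
          PTNet.mmk (X + M.postM U) (Y + N.postM V) := by
        rw [PTNet.mmk_add, PTNet.mmk_add, ← hpre, ← hpost]
        exact hfire
      exact (PTNet.mmk_inj h).2
  · rintro ⟨γ, ⟨U, hU, hα, hγ⟩, ⟨V, hV, hγ', hβ⟩⟩
    have hbal : M.tgtM U = N.srcM V := PTNet.chiM_inj (hγ ▸ hγ')
    obtain ⟨W, hpre, hpost, hsrc, htgt⟩ :=
      PTNet.decomp M N (Multiset.card U + Multiset.card V) U V le_rfl hbal
    refine ⟨W, ?_, by rw [hα, hsrc], by rw [hβ, htgt]⟩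
    show PTNet.mmk X' Y' + _ = PTNet.mmk X Y + _
    rw [hpre, hpost, ← PTNet.mmk_add, ← PTNet.mmk_add, hU, hV]
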